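/- Let 0 < r₁ ≤ r₂ and consider the MMSM instance with barrier [0, 2r₁ + 2r₂] × {0} and two sensors both located at (r₁ + r₂, 0), sensor 1 with radius r₁ and sensor 2 with radius r₂. Then for D = r₁ a fractional cover exists: there are Lebesgue-measurable sets A₁ ⊆ [r₂ − r₁, r₂ + 3r₁] and A₂ ⊆ [0, 2r₁ + 2r₂] with Lebesgue measures at most 2r₁ and 2r₂ respectively whose union is [0, 2r₁ + 2r₂]; yet every relocation that covers the barrier has some sensor with movement at least r₂. In particular the gap between the minimum maximum movement and the least D admitting a fractional cover is at least r₂ − r₁. -/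

import Mathlib

open MeasureTheory

/-- Leftmost point of the barrier coverable by a sensor at `(x, y)` with radius `r`
under movement bound `D`. -/
noncomputable def lpos (x y r D : ℝ) : ℝ := x - Real.sqrt (D ^ 2 - y ^ 2) - r

/-- Rightmost point of the barrier coverable by a sensor at `(x, y)` with radius `r`
under movement bound `D`. -/
noncomputable def gpos (x y r D : ℝ) : ℝ := x + Real.sqrt (D ^ 2 - y ^ 2) + r

/-- The MMSM instance with sensors at `(x i, y i)` of radii `r i` and barrier `[0, M]`
is feasible with respect to movement bound `D`. -/
def Feasible {n : ℕ} (x y r : Fin n → ℝ) (M D : ℝ) : Prop :=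
  ∃ (T : Finset (Fin n)) (p : Fin n → ℝ),
    (∀ i ∈ T, Real.sqrt ((x i - p i) ^ 2 + (y i) ^ 2) ≤ D) ∧
    ∀ q ∈ Set.Icc (0 : ℝ) M, ∃ i ∈ T, |q - p i| ≤ r i

/-- A fractional cover with respect to `D`: for each sensor `i` with `|yᵢ| ≤ D`, a
measurable set `Aᵢ ⊆ [lᵢ(D), gᵢ(D)] ∩ [0, M]` of measure at most `2rᵢ`, the union of
which covers `[0, M]`. -/
def FracCover {n : ℕ} (x y r : Fin n → ℝ) (M D : ℝ) : Prop :=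
  ∃ A : Fin n → Set ℝ,
    (∀ i, |y i| ≤ D →
      MeasurableSet (A i) ∧
      A i ⊆ Set.Icc (lpos (x i) (y i) (r i) D) (gpos (x i) (y i) (r i) D) ∩
        Set.Icc (0 : ℝ) M ∧
      volume (A i) ≤ ENNReal.ofReal (2 * r i)) ∧
    Set.Icc (0 : ℝ) M ⊆ ⋃ i, ⋃ (_ : |y i| ≤ D), A i

/-- For `0 < r₁ ≤ r₂` and the instance with barrier `[0, 2r₁ + 2r₂]` and two sensors
both at `(r₁ + r₂, 0)` of radii `r₁, r₂`: for `D = r₁` a fractional cover exists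
(with `A₁ ⊆ [r₂ - r₁, r₂ + 3r₁]`, `A₂ ⊆ [0, 2r₁ + 2r₂]`, of measures at most `2r₁`,
`2r₂`, whose union is `[0, 2r₁ + 2r₂]`), yet every covering relocation moves some sensor
at least `r₂`; in particular the gap between the minimum maximum movement and the least
`D` admitting a fractional cover is at least `r₂ - r₁`. -/
theorem stmt_9 (r₁ r₂ : ℝ) (h1 : 0 < r₁) (h12 : r₁ ≤ r₂) :
    (∃ A₁ A₂ : Set ℝ,
      MeasurableSet A₁ ∧ MeasurableSet A₂ ∧
      A₁ ⊆ Set.Icc (r₂ - r₁) (r₂ + 3 * r₁) ∧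
      A₂ ⊆ Set.Icc (0 : ℝ) (2 * r₁ + 2 * r₂) ∧
      volume A₁ ≤ ENNReal.ofReal (2 * r₁) ∧
      volume A₂ ≤ ENNReal.ofReal (2 * r₂) ∧
      A₁ ∪ A₂ = Set.Icc (0 : ℝ) (2 * r₁ + 2 * r₂)) ∧
    (∀ (T : Finset (Fin 2)) (p : Fin 2 → ℝ),
      (∀ q ∈ Set.Icc (0 : ℝ) (2 * r₁ + 2 * r₂), ∃ i ∈ T, |q - p i| ≤ ![r₁, r₂] i) →
      ∃ i ∈ T, r₂ ≤
        Real.sqrt ((![r₁ + r₂, r₁ + r₂] i - p i) ^ 2 + (![(0 : ℝ), 0] i) ^ 2)) ∧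
    r₂ - r₁ ≤
      sInf {D : ℝ | 0 ≤ D ∧
          Feasible ![r₁ + r₂, r₁ + r₂] ![0, 0] ![r₁, r₂] (2 * r₁ + 2 * r₂) D} -
      sInf {D : ℝ | 0 ≤ D ∧
          FracCover ![r₁ + r₂, r₁ + r₂] ![0, 0] ![r₁, r₂] (2 * r₁ + 2 * r₂) D} := by
  have hr2 : (0:ℝ) < r₂ := lt_of_lt_of_le h1 h12
  have htwo : ∀ k : Fin 2, k = 0 ∨ k = 1 := by decide
  have hunion : Set.Icc (r₂ - r₁) (r₂ + r₁) ∪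
      (Set.Icc 0 (r₂ - r₁) ∪ Set.Icc (r₂ + r₁) (2 * r₁ + 2 * r₂)) =
      Set.Icc (0:ℝ) (2 * r₁ + 2 * r₂) := by
    ext t
    simp only [Set.mem_union, Set.mem_Icc]
    constructor
    · rintro (⟨h, h'⟩ | ⟨h, h'⟩ | ⟨h, h'⟩) <;> constructor <;> linarith
    · rintro ⟨h, h'⟩
      rcases le_or_gt t (r₂ - r₁) with ht | ht
      · exact Or.inr (Or.inl ⟨h, ht⟩)
      rcases le_or_gt t (r₂ + r₁) with ht2 | ht2
      · exact Or.inl ⟨ht.le, ht2⟩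
      · exact Or.inr (Or.inr ⟨ht2.le, h'⟩)
  have hvolA2 : volume (Set.Icc (0:ℝ) (r₂ - r₁) ∪ Set.Icc (r₂ + r₁) (2 * r₁ + 2 * r₂)) ≤
      ENNReal.ofReal (2 * r₂) := by
    refine (measure_union_le _ _).trans ?_
    rw [Real.volume_Icc, Real.volume_Icc,
      ← ENNReal.ofReal_add (by linarith) (by linarith)]
    exact ENNReal.ofReal_le_ofReal (by ring_nf; linarith)
  have hsqeq : ∀ (p : Fin 2 → ℝ) (i : Fin 2),
      Real.sqrt ((![r₁ + r₂, r₁ + r₂] i - p i) ^ 2 + (![(0:ℝ), 0] i) ^ 2) =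
        |r₁ + r₂ - p i| := by
    intro p i
    fin_cases i <;> simp [Real.sqrt_sq_eq_abs]
  have hcov : ∀ (T : Finset (Fin 2)) (p : Fin 2 → ℝ),
      (∀ q ∈ Set.Icc (0 : ℝ) (2 * r₁ + 2 * r₂), ∃ i ∈ T, |q - p i| ≤ ![r₁, r₂] i) →
      ∃ i ∈ T, r₂ ≤
        Real.sqrt ((![r₁ + r₂, r₁ + r₂] i - p i) ^ 2 + (![(0 : ℝ), 0] i) ^ 2) := by
    intro T p h
    obtain ⟨i, hiT, hi⟩ := h 0 ⟨le_refl _, by linarith⟩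
    obtain ⟨j, hjT, hj⟩ := h (2 * r₁ + 2 * r₂) ⟨by linarith, le_refl _⟩
    have habs : ∀ k ∈ T, r₂ ≤ |r₁ + r₂ - p k| →
        ∃ i ∈ T, r₂ ≤
          Real.sqrt ((![r₁ + r₂, r₁ + r₂] i - p i) ^ 2 + (![(0 : ℝ), 0] i) ^ 2) :=
      fun k hk hle => ⟨k, hk, by rw [hsqeq p k]; exact hle⟩
    rcases htwo i with rfl | rfl
    · simp only [Matrix.cons_val_zero] at hi
      refine habs 0 hiT ?_
      rw [abs_le] at hi
      exact le_trans (by linarith [hi.2]) (le_abs_self _)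
    · rcases htwo j with rfl | rfl
      · simp only [Matrix.cons_val_zero] at hj
        refine habs 0 hjT ?_
        rw [abs_le] at hj
        exact le_trans (by linarith [hj.1]) (neg_le_abs _)
      · simp only [Matrix.cons_val_one, Matrix.head_cons, Matrix.cons_val_zero] at hi hj
        rw [abs_le] at hi hj
        exfalso; linarith [hi.1, hi.2, hj.1, hj.2]
  refine ⟨⟨Set.Icc (r₂ - r₁) (r₂ + r₁),
      Set.Icc 0 (r₂ - r₁) ∪ Set.Icc (r₂ + r₁) (2 * r₁ + 2 * r₂),
      measurableSet_Icc, (measurableSet_Icc.union measurableSet_Icc),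
      Set.Icc_subset_Icc le_rfl (by linarith),
      ?_, ?_, hvolA2, hunion⟩, hcov, ?_⟩
  · rintro t (⟨h, h'⟩ | ⟨h, h'⟩) <;> exact ⟨by linarith, by linarith⟩
  · rw [Real.volume_Icc]
    exact ENNReal.ofReal_le_ofReal (by linarith)
  -- Part 3
  · have hfrac : r₁ ∈ {D : ℝ | 0 ≤ D ∧
        FracCover ![r₁ + r₂, r₁ + r₂] ![0, 0] ![r₁, r₂] (2 * r₁ + 2 * r₂) D} := by
      refine ⟨h1.le, ![Set.Icc (r₂ - r₁) (r₂ + r₁),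
        Set.Icc 0 (r₂ - r₁) ∪ Set.Icc (r₂ + r₁) (2 * r₁ + 2 * r₂)], ?_, ?_⟩
      · intro i _
        have hsq : Real.sqrt (r₁ ^ 2 - 0 ^ 2) = r₁ := by
          rw [show r₁ ^ 2 - 0 ^ 2 = r₁ ^ 2 by ring]
          exact Real.sqrt_sq h1.le
        rcases htwo i with rfl | rfl
        · refine ⟨measurableSet_Icc, ?_, ?_⟩
          · simp only [lpos, gpos, Matrix.cons_val_zero, hsq]
            intro t ht
            rw [Set.mem_Icc] at ht
            exact ⟨⟨by linarith [ht.1], by linarith [ht.2]⟩, ⟨by linarith [ht.1], by linarith [ht.2]⟩⟩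
          · simp only [Matrix.cons_val_zero, Real.volume_Icc]
            exact ENNReal.ofReal_le_ofReal (by linarith)
        · refine ⟨measurableSet_Icc.union measurableSet_Icc, ?_, ?_⟩
          · simp only [lpos, gpos, Matrix.cons_val_one, Matrix.head_cons, Matrix.cons_val_zero, hsq]
            rintro t (⟨h, h'⟩ | ⟨h, h'⟩) <;>
              exact ⟨⟨by linarith, by linarith⟩, ⟨by linarith, by linarith⟩⟩
          · simpa using hvolA2
      · intro t ht
        rw [← hunion] at ht
        simp only [Set.mem_iUnion]
        rcases ht with h | h
        · exact ⟨0, by simpa using h1.le, h⟩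
        · exact ⟨1, by simpa using h1.le, h⟩
    have hfeas : r₂ ∈ {D : ℝ | 0 ≤ D ∧
        Feasible ![r₁ + r₂, r₁ + r₂] ![0, 0] ![r₁, r₂] (2 * r₁ + 2 * r₂) D} := by
      refine ⟨hr2.le, Finset.univ, ![r₁, 2 * r₁ + r₂], ?_, ?_⟩
      · intro i _
        rcases htwo i with rfl | rfl
        · simp only [Matrix.cons_val_zero]
          rw [show (r₁ + r₂ - r₁) ^ 2 + (0:ℝ) ^ 2 = r₂ ^ 2 by ring, Real.sqrt_sq hr2.le]
        · simp only [Matrix.cons_val_one, Matrix.head_cons, Matrix.cons_val_zero]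
          rw [show (r₁ + r₂ - (2 * r₁ + r₂)) ^ 2 + (0:ℝ) ^ 2 = r₁ ^ 2 by ring,
            Real.sqrt_sq h1.le]
          exact h12
      · intro q hq
        rw [Set.mem_Icc] at hq
        rcases le_or_gt q (2 * r₁) with hql | hql
        · exact ⟨0, Finset.mem_univ _, by
            simp only [Matrix.cons_val_zero]
            rw [abs_le]; exact ⟨by linarith [hq.1], by linarith⟩⟩
        · exact ⟨1, Finset.mem_univ _, by
            simp only [Matrix.cons_val_one, Matrix.head_cons, Matrix.cons_val_zero]
            rw [abs_le]; exact ⟨by linarith, by linarith [hq.2]⟩⟩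
    have hle1 : sInf {D : ℝ | 0 ≤ D ∧
        FracCover ![r₁ + r₂, r₁ + r₂] ![0, 0] ![r₁, r₂] (2 * r₁ + 2 * r₂) D} ≤ r₁ :=
      csInf_le ⟨0, fun D hD => hD.1⟩ hfrac
    have hge : r₂ ≤ sInf {D : ℝ | 0 ≤ D ∧
        Feasible ![r₁ + r₂, r₁ + r₂] ![0, 0] ![r₁, r₂] (2 * r₁ + 2 * r₂) D} := by
      refine le_csInf ⟨r₂, hfeas⟩ ?_
      rintro D ⟨_, T, p, hmov, hcover⟩
      obtain ⟨i, hiT, hle⟩ := hcov T p hcover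
      exact hle.trans (hmov i hiT)
    linarith
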